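/- Let n ≥ 2 and f ≥ 1 be natural numbers, and let 𝒴 be a countable family of multisets of binary strings, each of cardinality n, such that every string belongs to at most f members of 𝒴. Then there exists a labeling L : 𝒴 → Fin (n·f − (n − 1)) such that whenever Y ≠ Y' are members of 𝒴 sharing a common element, L(Y) ≠ L(Y'). -/

import Mathlib

lemma myfree {m : ℕ} (s : Finset (Fin m)) (hs : s.card < m) : ∃ c, c ∉ s := by
  by_contra h
  push_neg at h
  have hsub : (Finset.univ : Finset (Fin m)) ⊆ s := fun c _ => h c
  have := Finset.card_le_card hsub
  simp at this
  omega

noncomputable def greedyF {V : Type*} (G : V → V → Prop) (e : V → ℕ) (m : ℕ)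
    (hfin : ∀ v, {w | G v w}.Finite)
    (hdeg : ∀ v, (hfin v).toFinset.card < m) : ℕ → V → Fin m := fun k =>
  Nat.strongRec (motive := fun _ => V → Fin m) (t := k) (fun k prev v =>
    Classical.choose (myfree
      (((hfin v).toFinset.filter (fun w => e w < k)).attach.image
        (fun w => prev (e w.1) (by exact (Finset.mem_filter.mp w.2).2) w.1))
      (by
        refine lt_of_le_of_lt (Finset.card_image_le.trans ?_) (hdeg v)
        rw [Finset.card_attach]
        exact Finset.card_filter_le _ _)))

lemma greedyF_spec {V : Type*} (G : V → V → Prop) (e : V → ℕ) (m : ℕ)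
    (hfin : ∀ v, {w | G v w}.Finite)
    (hdeg : ∀ v, (hfin v).toFinset.card < m) (v : V) :
    greedyF G e m hfin hdeg (e v) v ∉
      (((hfin v).toFinset.filter (fun w => e w < e v)).attach.image
        (fun w => greedyF G e m hfin hdeg (e w.1) w.1)) := by
  unfold greedyF
  rw [Nat.strongRecOn'_beta]
  exact Classical.choose_spec (myfree _ (by
    refine lt_of_le_of_lt (Finset.card_image_le.trans ?_) (hdeg v)
    rw [Finset.card_attach]
    exact Finset.card_filter_le _ _))

lemma greedy_coloring {V : Type*} (G : V → V → Prop) (e : V → ℕ) (m : ℕ)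
    (hfin : ∀ v, {w | G v w}.Finite)
    (hdeg : ∀ v, (hfin v).toFinset.card < m) :
    ∃ L : V → Fin m, ∀ v w, G v w → e w < e v → L v ≠ L w := by
  refine ⟨fun v => greedyF G e m hfin hdeg (e v) v, fun v w hG hlt hEq => ?_⟩
  apply greedyF_spec G e m hfin hdeg v
  rw [Finset.mem_image]
  have hw : w ∈ (hfin v).toFinset.filter (fun w => e w < e v) := by
    rw [Finset.mem_filter, Set.Finite.mem_toFinset]
    exact ⟨hG, hlt⟩
  exact ⟨⟨w, hw⟩, Finset.mem_attach _ _, hEq.symm⟩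

theorem labeling_exists (n f : ℕ) (hn : 2 ≤ n) (hf : 1 ≤ f)
    (𝒴 : Set (Multiset (List Bool))) (hcount : 𝒴.Countable)
    (hcard : ∀ Y ∈ 𝒴, Multiset.card Y = n)
    (hmemfin : ∀ y : List Bool, {Y ∈ 𝒴 | y ∈ Y}.Finite)
    (hmem : ∀ y : List Bool, {Y ∈ 𝒴 | y ∈ Y}.ncard ≤ f) :
    ∃ L : Multiset (List Bool) → Fin (n * f - (n - 1)),
      ∀ Y ∈ 𝒴, ∀ Y' ∈ 𝒴, Y ≠ Y' → (∃ s : List Bool, s ∈ Y ∧ s ∈ Y') →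
        L Y ≠ L Y' := by
  classical
  set m := n * f - (n - 1) with hm
  -- injective enumeration of 𝒴
  haveI : Countable ↥𝒴 := hcount.to_subtype
  obtain ⟨e₀, he₀⟩ := Countable.exists_injective_nat ↥𝒴
  set e : Multiset (List Bool) → ℕ :=
    fun Y => if h : Y ∈ 𝒴 then e₀ ⟨Y, h⟩ else 0 with he
  have heinj : ∀ Y ∈ 𝒴, ∀ Y' ∈ 𝒴, Y ≠ Y' → e Y ≠ e Y' := by
    intro Y hY Y' hY' hne h
    simp only [he, dif_pos hY, dif_pos hY'] at h
    exact hne (Subtype.mk_eq_mk.mp (he₀ h))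
  -- conflict relation
  set G : Multiset (List Bool) → Multiset (List Bool) → Prop :=
    fun Y Z => Y ∈ 𝒴 ∧ Z ∈ 𝒴 ∧ Y ≠ Z ∧ ∃ s, s ∈ Y ∧ s ∈ Z with hG
  have hGsymm : ∀ Y Z, G Y Z → G Z Y := by
    rintro Y Z ⟨h1, h2, h3, s, h4, h5⟩
    exact ⟨h2, h1, h3.symm, s, h5, h4⟩
  -- neighborhoods are finite and small
  have hmlb : n * (f - 1) + 1 ≤ m := by
    obtain ⟨f', rfl⟩ : ∃ f', f = f' + 1 := ⟨f - 1, by omega⟩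
    have h1 : n * (f' + 1) = n * f' + n := by ring
    have h2 : n * (f' + 1 - 1) = n * f' := by simp
    omega
  have hsub : ∀ v, {w | G v w} ⊆
      ↑(v.toFinset.biUnion (fun s => ((hmemfin s).toFinset.erase v))) := by
    rintro v w ⟨h1, h2, h3, s, h4, h5⟩
    simp only [Finset.coe_biUnion, Set.mem_iUnion, Finset.mem_coe,
      Finset.mem_erase, Set.Finite.mem_toFinset]
    exact ⟨s, Multiset.mem_toFinset.mpr h4, fun h => h3 (h ▸ rfl), h2, h5⟩
  have hfin : ∀ v, {w | G v w}.Finite := fun v =>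
    Set.Finite.subset (Finset.finite_toSet _) (hsub v)
  have hdeg : ∀ v, (hfin v).toFinset.card < m := by
    intro v
    by_cases hv : v ∈ 𝒴
    swap
    · have hempty : (hfin v).toFinset = ∅ := by
        ext w
        simp only [Set.Finite.mem_toFinset, Finset.notMem_empty, iff_false,
          Set.mem_setOf_eq, hG]
        rintro ⟨h1, _⟩
        exact hv h1
      rw [hempty]
      simp only [Finset.card_empty]
      omega
    have hss : (hfin v).toFinset ⊆
        v.toFinset.biUnion (fun s => ((hmemfin s).toFinset.erase v)) := by
      intro w hw
      rw [Set.Finite.mem_toFinset] at hw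
      exact_mod_cast hsub v hw
    have hle1 : (hfin v).toFinset.card ≤
        (v.toFinset.biUnion (fun s => ((hmemfin s).toFinset.erase v))).card :=
      Finset.card_le_card hss
    have hle2 : (v.toFinset.biUnion (fun s => ((hmemfin s).toFinset.erase v))).card ≤
        v.toFinset.card * (f - 1) := by
      refine le_trans (Finset.card_biUnion_le) ?_
      rw [Finset.card_eq_sum_ones v.toFinset, Finset.sum_mul, one_mul]
      refine Finset.sum_le_sum (fun s hs => ?_)
      have hcardf : ((hmemfin s).toFinset).card ≤ f := by
        have := hmem s
        rwa [Set.ncard_eq_toFinset_card _ (hmemfin s)] at this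
      have hvmem : v ∈ (hmemfin s).toFinset := by
        rw [Set.Finite.mem_toFinset]
        exact ⟨hv, Multiset.mem_toFinset.mp hs⟩
      rw [Finset.card_erase_of_mem hvmem]
      omega
    have hle3 : v.toFinset.card * (f - 1) ≤ n * (f - 1) :=
      Nat.mul_le_mul_right _ (le_of_le_of_eq (Multiset.toFinset_card_le v)
        (hcard v hv))
    omega
  obtain ⟨L, hL⟩ := greedy_coloring G e m hfin hdeg
  refine ⟨L, fun Y hY Y' hY' hne hshare => ?_⟩
  have hGYY' : G Y Y' := ⟨hY, hY', hne, hshare⟩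
  rcases lt_or_gt_of_ne (heinj Y hY Y' hY' hne) with h | h
  · exact (hL Y' Y (hGsymm _ _ hGYY') h).symm
  · exact hL Y Y' hGYY' h
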